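/- Let R be a right perfect ring. If M = M₁ ⊕ M₂ is a dual automorphism-invariant right R-module, then M₁ and M₂ are both dual automorphism-invariant, M₁ is M₂-projective, and M₂ is M₁-projective. Consequently, over a right perfect ring, a right R-module M is quasi-projective if and only if M ⊕ M is dual automorphism-invariant. -/

import Mathlib

open LinearMap Submodule

/-- A submodule N of M is small (superfluous) in M:
N + K = M implies K = M for every submodule K. -/
def IsSmall {R : Type*} [Ring R] {M : Type*} [AddCommGroup M] [Module R M]
    (N : Submodule R M) : Prop :=
  ∀ K : Submodule R M, N ⊔ K = ⊤ → K = ⊤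

/-- M is a dual automorphism-invariant R-module: for any two small submodules
K₁, K₂ of M, every surjective homomorphism η : M/K₁ → M/K₂ whose kernel is
small in M/K₁ lifts to an endomorphism φ of M (i.e. π₂ ∘ φ = η ∘ π₁). -/
def IsDualAutoInv (R M : Type*) [Ring R] [AddCommGroup M] [Module R M] : Prop :=
  ∀ (K₁ K₂ : Submodule R M), IsSmall K₁ → IsSmall K₂ →
    ∀ η : (M ⧸ K₁) →ₗ[R] (M ⧸ K₂), Function.Surjective η →
      IsSmall (LinearMap.ker η) →
      ∃ φ : M →ₗ[R] M, K₂.mkQ ∘ₗ φ = η ∘ₗ K₁.mkQ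

universe u

/-- R is a (right) perfect ring: every R-module has a projective cover, i.e. a
surjection from a projective module with small kernel. -/
def IsRightPerfect (R : Type u) [Ring R] : Prop :=
  ∀ (A : Type u) [AddCommGroup A] [Module R A],
    ∃ (P : Type u) (_ : AddCommGroup P) (_ : Module R P),
      Module.Projective R P ∧
        ∃ μ : P →ₗ[R] A, Function.Surjective μ ∧ IsSmall (LinearMap.ker μ)

/-- A is B-projective: every homomorphism A → B/N lifts to a homomorphism A → B. -/
def IsRelProjective (R A B : Type*) [Ring R] [AddCommGroup A] [Module R A]
    [AddCommGroup B] [Module R B] : Prop :=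
  ∀ (N : Submodule R B) (f : A →ₗ[R] B ⧸ N), ∃ g : A →ₗ[R] B, N.mkQ ∘ₗ g = f

/-- M is quasi-projective: every homomorphism M → M/N lifts to an endomorphism of M. -/
def IsQuasiProjective (R M : Type*) [Ring R] [AddCommGroup M] [Module R M] : Prop :=
  ∀ (N : Submodule R M) (φ : M →ₗ[R] M ⧸ N), ∃ ψ : M →ₗ[R] M, N.mkQ ∘ₗ ψ = φ

/-! ### Auxiliary lemmas on small submodules -/

section Helpers
variable {R : Type*} [Ring R] {M N : Type*} [AddCommGroup M] [Module R M]
  [AddCommGroup N] [Module R N]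

theorem isSmall_bot : IsSmall (⊥ : Submodule R M) := fun K h => by simpa using h

theorem IsSmall.mono {S T : Submodule R M} (hST : S ≤ T) (hT : IsSmall T) : IsSmall S := by
  intro K hK
  apply hT
  rw [eq_top_iff, ← hK]
  exact sup_le_sup_right hST K

theorem IsSmall.map {K : Submodule R M} (hK : IsSmall K) (f : M →ₗ[R] N) :
    IsSmall (K.map f) := by
  intro L hL
  have h1 : K ⊔ L.comap f = ⊤ := by
    rw [eq_top_iff]
    rintro x -
    have hx : f x ∈ K.map f ⊔ L := hL ▸ mem_top
    obtain ⟨y, hy, z, hz, hyz⟩ := mem_sup.mp hx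
    obtain ⟨k, hk, rfl⟩ := hy
    refine mem_sup.mpr ⟨k, hk, x - k, ?_, by abel⟩
    simp only [mem_comap, map_sub]
    have : f x - f k = z := by rw [← hyz]; abel
    rw [this]; exact hz
  have h2 : L.comap f = ⊤ := hK _ h1
  rw [eq_top_iff, ← hL]
  apply sup_le _ le_rfl
  rintro y ⟨k, hk, rfl⟩
  have : k ∈ L.comap f := h2 ▸ mem_top
  exact this

theorem IsSmall.comap {f : M →ₗ[R] N} (hf : Function.Surjective f)
    (hker : IsSmall (LinearMap.ker f)) {S : Submodule R N} (hS : IsSmall S) :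
    IsSmall (S.comap f) := by
  intro L hL
  have h1 : S ⊔ L.map f = ⊤ := by
    rw [eq_top_iff]
    rintro y -
    obtain ⟨x, rfl⟩ := hf y
    have hx : x ∈ S.comap f ⊔ L := hL ▸ mem_top
    obtain ⟨a, ha, b, hb, rfl⟩ := mem_sup.mp hx
    exact mem_sup.mpr ⟨f a, ha, f b, ⟨b, hb, rfl⟩, (map_add f a b).symm⟩
  have h2 : L.map f = ⊤ := hS _ h1
  have h3 : LinearMap.ker f ⊔ L = ⊤ := by
    rw [eq_top_iff]
    rintro x -
    have : f x ∈ L.map f := h2 ▸ mem_top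
    obtain ⟨b, hb, hfe⟩ := this
    refine mem_sup.mpr ⟨x - b, ?_, b, hb, by abel⟩
    simp [LinearMap.mem_ker, map_sub, hfe]
  exact hker L h3

end Helpers

/-! ### Dual automorphism-invariance passes to direct summands -/

section A
variable {R M₁ M₂ : Type*} [Ring R] [AddCommGroup M₁] [Module R M₁]
  [AddCommGroup M₂] [Module R M₂]

theorem dualAutoInv_left (hdual : IsDualAutoInv R (M₁ × M₂)) : IsDualAutoInv R M₁ := by
  intro K₁ K₂ hK₁ hK₂ η hηsurj hηker
  set L₁ : Submodule R (M₁ × M₂) := Submodule.prod K₁ ⊥ with hL₁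
  set L₂ : Submodule R (M₁ × M₂) := Submodule.prod K₂ ⊥ with hL₂
  have hL₁small : IsSmall L₁ := by
    have := hK₁.map (inl R M₁ M₂); rwa [Submodule.map_inl] at this
  have hL₂small : IsSmall L₂ := by
    have := hK₂.map (inl R M₁ M₂); rwa [Submodule.map_inl] at this
  have hι : K₂ ≤ ker (L₂.mkQ ∘ₗ inl R M₁ M₂) := by
    intro k hk
    simp only [mem_ker, comp_apply, inl_apply, mkQ_apply, Submodule.Quotient.mk_eq_zero]
    exact ⟨hk, Submodule.zero_mem _⟩
  set ι : (M₁ ⧸ K₂) →ₗ[R] (M₁ × M₂) ⧸ L₂ := K₂.liftQ (L₂.mkQ ∘ₗ inl R M₁ M₂) hι with hιdef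
  have hιapp : ∀ c : M₁, ι (Submodule.Quotient.mk c) = Submodule.Quotient.mk (c, 0) := by
    intro c; simp [hιdef, liftQ_apply]
  set w : (M₁ × M₂) →ₗ[R] (M₁ × M₂) ⧸ L₂ :=
    ι ∘ₗ η ∘ₗ K₁.mkQ ∘ₗ fst R M₁ M₂ + L₂.mkQ ∘ₗ inr R M₁ M₂ ∘ₗ snd R M₁ M₂ with hw
  have hwker : L₁ ≤ ker w := by
    rintro ⟨x, y⟩ ⟨hx, hy⟩
    have hy0 : y = (0 : M₂) := hy
    have hx0 : K₁.mkQ x = 0 := by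
      rw [mkQ_apply, Submodule.Quotient.mk_eq_zero]; exact hx
    simp [hw, mem_ker, hx0, hy0]; exact L₂.zero_mem
  set η' : ((M₁ × M₂) ⧸ L₁) →ₗ[R] (M₁ × M₂) ⧸ L₂ := L₁.liftQ w hwker with hη'
  have hη'app : ∀ x : M₁ × M₂, η' (Submodule.Quotient.mk x) = w x := by
    intro x; simp [hη', liftQ_apply]
  have hwapp : ∀ (x : M₁) (y : M₂) (c : M₁), η (Submodule.Quotient.mk x) =
      Submodule.Quotient.mk c → w (x, y) = Submodule.Quotient.mk (c, y) := by
    intro x y c hc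
    simp only [hw, LinearMap.add_apply, comp_apply, fst_apply, snd_apply, inr_apply, mkQ_apply]
    rw [hc, hιapp, ← Submodule.Quotient.mk_add]
    congr 1
    ext <;> simp
  have hη'surj : Function.Surjective η' := by
    intro z
    obtain ⟨⟨a, b⟩, rfl⟩ := Submodule.Quotient.mk_surjective L₂ z
    obtain ⟨z₁, hz₁⟩ := hηsurj (Submodule.Quotient.mk a)
    obtain ⟨x, rfl⟩ := Submodule.Quotient.mk_surjective K₁ z₁
    exact ⟨Submodule.Quotient.mk (x, b), by rw [hη'app, hwapp x b a hz₁]⟩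
  have hη'ker : IsSmall (ker η') := by
    have hT : IsSmall ((((ker η).comap K₁.mkQ).prod ⊥ : Submodule R (M₁ × M₂)).map L₁.mkQ) := by
      refine IsSmall.map ?_ _
      have hsm : IsSmall ((ker η).comap K₁.mkQ) := by
        refine IsSmall.comap (Submodule.Quotient.mk_surjective K₁) ?_ hηker
        rw [Submodule.ker_mkQ]; exact hK₁
      have := hsm.map (inl R M₁ M₂); rwa [Submodule.map_inl] at this
    refine IsSmall.mono ?_ hT
    intro q hq
    obtain ⟨⟨x, y⟩, rfl⟩ := Submodule.Quotient.mk_surjective _ q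
    rw [mem_ker, hη'app] at hq
    obtain ⟨c, hc⟩ := Submodule.Quotient.mk_surjective K₂ (η (Submodule.Quotient.mk x))
    rw [hwapp x y c hc.symm] at hq
    rw [Submodule.Quotient.mk_eq_zero, Submodule.mem_prod] at hq
    obtain ⟨hcK, hy0⟩ := hq
    have hy0' : y = 0 := hy0
    have hxker : η (Submodule.Quotient.mk x) = 0 := by
      rw [← hc]; exact (Submodule.Quotient.mk_eq_zero _).mpr hcK
    exact ⟨(x, y), ⟨by simpa [mem_ker, mkQ_apply] using hxker, by simp [hy0']⟩, rfl⟩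
  obtain ⟨φ, hφ⟩ := hdual L₁ L₂ hL₁small hL₂small η' hη'surj hη'ker
  refine ⟨fst R M₁ M₂ ∘ₗ φ ∘ₗ inl R M₁ M₂, ?_⟩
  ext x
  obtain ⟨c, hc⟩ := Submodule.Quotient.mk_surjective K₂ (η (Submodule.Quotient.mk x))
  have h1 : L₂.mkQ (φ (x, 0)) = η' (Submodule.Quotient.mk (x, 0)) := by
    have := congrArg (fun m => m (x, 0)) hφ
    simpa using this
  rw [hη'app, hwapp x 0 c hc.symm] at h1
  rw [mkQ_apply, Submodule.Quotient.eq, Submodule.mem_prod] at h1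
  obtain ⟨hfst, -⟩ := h1
  simp only [comp_apply, inl_apply, fst_apply, mkQ_apply]
  rw [← hc, Submodule.Quotient.eq]
  exact hfst

theorem dualAutoInv_right (hdual : IsDualAutoInv R (M₁ × M₂)) : IsDualAutoInv R M₂ := by
  intro K₁ K₂ hK₁ hK₂ η hηsurj hηker
  set L₁ : Submodule R (M₁ × M₂) := Submodule.prod ⊥ K₁ with hL₁
  set L₂ : Submodule R (M₁ × M₂) := Submodule.prod ⊥ K₂ with hL₂
  have hL₁small : IsSmall L₁ := by
    have := hK₁.map (inr R M₁ M₂); rwa [Submodule.map_inr] at this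
  have hL₂small : IsSmall L₂ := by
    have := hK₂.map (inr R M₁ M₂); rwa [Submodule.map_inr] at this
  have hι : K₂ ≤ ker (L₂.mkQ ∘ₗ inr R M₁ M₂) := by
    intro k hk
    simp only [mem_ker, comp_apply, inr_apply, mkQ_apply, Submodule.Quotient.mk_eq_zero]
    exact ⟨Submodule.zero_mem _, hk⟩
  set ι : (M₂ ⧸ K₂) →ₗ[R] (M₁ × M₂) ⧸ L₂ := K₂.liftQ (L₂.mkQ ∘ₗ inr R M₁ M₂) hι with hιdef
  have hιapp : ∀ c : M₂, ι (Submodule.Quotient.mk c) = Submodule.Quotient.mk (0, c) := by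
    intro c; simp [hιdef, liftQ_apply]
  set w : (M₁ × M₂) →ₗ[R] (M₁ × M₂) ⧸ L₂ :=
    ι ∘ₗ η ∘ₗ K₁.mkQ ∘ₗ snd R M₁ M₂ + L₂.mkQ ∘ₗ inl R M₁ M₂ ∘ₗ fst R M₁ M₂ with hw
  have hwker : L₁ ≤ ker w := by
    rintro ⟨x, y⟩ ⟨hx, hy⟩
    have hx0 : x = (0 : M₁) := hx
    have hy0 : K₁.mkQ y = 0 := by
      rw [mkQ_apply, Submodule.Quotient.mk_eq_zero]; exact hy
    simp [hw, mem_ker, hx0, hy0]; exact L₂.zero_mem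
  set η' : ((M₁ × M₂) ⧸ L₁) →ₗ[R] (M₁ × M₂) ⧸ L₂ := L₁.liftQ w hwker with hη'
  have hη'app : ∀ x : M₁ × M₂, η' (Submodule.Quotient.mk x) = w x := by
    intro x; simp [hη', liftQ_apply]
  have hwapp : ∀ (x : M₁) (y : M₂) (c : M₂), η (Submodule.Quotient.mk y) =
      Submodule.Quotient.mk c → w (x, y) = Submodule.Quotient.mk (x, c) := by
    intro x y c hc
    simp only [hw, LinearMap.add_apply, comp_apply, fst_apply, snd_apply, inl_apply, mkQ_apply]
    rw [hc, hιapp, ← Submodule.Quotient.mk_add]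
    congr 1
    ext <;> simp
  have hη'surj : Function.Surjective η' := by
    intro z
    obtain ⟨⟨a, b⟩, rfl⟩ := Submodule.Quotient.mk_surjective L₂ z
    obtain ⟨z₁, hz₁⟩ := hηsurj (Submodule.Quotient.mk b)
    obtain ⟨y, rfl⟩ := Submodule.Quotient.mk_surjective K₁ z₁
    exact ⟨Submodule.Quotient.mk (a, y), by rw [hη'app, hwapp a y b hz₁]⟩
  have hη'ker : IsSmall (ker η') := by
    have hT : IsSmall (((⊥ : Submodule R M₁).prod ((ker η).comap K₁.mkQ)
        : Submodule R (M₁ × M₂)).map L₁.mkQ) := by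
      refine IsSmall.map ?_ _
      have hsm : IsSmall ((ker η).comap K₁.mkQ) := by
        refine IsSmall.comap (Submodule.Quotient.mk_surjective K₁) ?_ hηker
        rw [Submodule.ker_mkQ]; exact hK₁
      have := hsm.map (inr R M₁ M₂); rwa [Submodule.map_inr] at this
    refine IsSmall.mono ?_ hT
    intro q hq
    obtain ⟨⟨x, y⟩, rfl⟩ := Submodule.Quotient.mk_surjective _ q
    rw [mem_ker, hη'app] at hq
    obtain ⟨c, hc⟩ := Submodule.Quotient.mk_surjective K₂ (η (Submodule.Quotient.mk y))
    rw [hwapp x y c hc.symm] at hq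
    rw [Submodule.Quotient.mk_eq_zero, Submodule.mem_prod] at hq
    obtain ⟨hx0, hcK⟩ := hq
    have hx0' : x = 0 := hx0
    have hyker : η (Submodule.Quotient.mk y) = 0 := by
      rw [← hc]; exact (Submodule.Quotient.mk_eq_zero _).mpr hcK
    exact ⟨(x, y), ⟨by simp [hx0'], by simpa [mem_ker, mkQ_apply] using hyker⟩, rfl⟩
  obtain ⟨φ, hφ⟩ := hdual L₁ L₂ hL₁small hL₂small η' hη'surj hη'ker
  refine ⟨snd R M₁ M₂ ∘ₗ φ ∘ₗ inr R M₁ M₂, ?_⟩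
  ext y
  obtain ⟨c, hc⟩ := Submodule.Quotient.mk_surjective K₂ (η (Submodule.Quotient.mk y))
  have h1 : L₂.mkQ (φ (0, y)) = η' (Submodule.Quotient.mk (0, y)) := by
    have := congrArg (fun m => m (0, y)) hφ
    simpa using this
  rw [hη'app, hwapp 0 y c hc.symm] at h1
  rw [mkQ_apply, Submodule.Quotient.eq, Submodule.mem_prod] at h1
  obtain ⟨-, hsnd⟩ := h1
  simp only [comp_apply, inr_apply, snd_apply, mkQ_apply]
  rw [← hc, Submodule.Quotient.eq]
  exact hsnd

/-! ### Lifting along small quotients from dual automorphism-invariance -/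

theorem smallProj_right (hdual : IsDualAutoInv R (M₁ × M₂)) {K : Submodule R M₂}
    (hK : IsSmall K) (f : M₁ →ₗ[R] M₂ ⧸ K) : ∃ g : M₁ →ₗ[R] M₂, K.mkQ ∘ₗ g = f := by
  set L : Submodule R (M₁ × M₂) := Submodule.prod ⊥ K with hL
  have hLsmall : IsSmall L := by
    have := hK.map (inr R M₁ M₂); rwa [Submodule.map_inr] at this
  have hι : K ≤ ker (L.mkQ ∘ₗ inr R M₁ M₂) := by
    intro k hk
    simp only [mem_ker, comp_apply, inr_apply, mkQ_apply, Submodule.Quotient.mk_eq_zero]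
    exact ⟨Submodule.zero_mem _, hk⟩
  set ι : (M₂ ⧸ K) →ₗ[R] (M₁ × M₂) ⧸ L := K.liftQ (L.mkQ ∘ₗ inr R M₁ M₂) hι with hιdef
  have hιapp : ∀ c : M₂, ι (Submodule.Quotient.mk c) = Submodule.Quotient.mk (0, c) := by
    intro c; simp [hιdef, liftQ_apply]
  set w : (M₁ × M₂) →ₗ[R] (M₁ × M₂) ⧸ L := L.mkQ + ι ∘ₗ f ∘ₗ fst R M₁ M₂ with hw
  set η : ((M₁ × M₂) ⧸ (⊥ : Submodule R (M₁ × M₂))) →ₗ[R] (M₁ × M₂) ⧸ L :=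
    (⊥ : Submodule R (M₁ × M₂)).liftQ w bot_le with hη
  have hηapp : ∀ x : M₁ × M₂, η (Submodule.Quotient.mk x) = w x := by
    intro x; simp [hη, liftQ_apply]
  have hηsurj : Function.Surjective η := by
    intro z
    obtain ⟨⟨a, b⟩, rfl⟩ := Submodule.Quotient.mk_surjective L z
    obtain ⟨c, hc⟩ := Submodule.Quotient.mk_surjective K (f a)
    refine ⟨Submodule.Quotient.mk (a, b - c), ?_⟩
    rw [hηapp]
    simp only [hw, LinearMap.add_apply, comp_apply, fst_apply, mkQ_apply]
    rw [← hc, hιapp]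
    rw [← Submodule.Quotient.mk_add]
    congr 1
    ext <;> simp
  have hηker : IsSmall (ker η) := by
    refine IsSmall.mono ?_ (hLsmall.map (⊥ : Submodule R (M₁ × M₂)).mkQ)
    intro q hq
    obtain ⟨⟨x, y⟩, rfl⟩ := Submodule.Quotient.mk_surjective _ q
    rw [mem_ker, hηapp] at hq
    obtain ⟨c, hc⟩ := Submodule.Quotient.mk_surjective K (f x)
    have h0 : Submodule.Quotient.mk (p := L) (x, y + c) = 0 := by
      have := hq
      simp only [hw, LinearMap.add_apply, comp_apply, fst_apply, mkQ_apply, ← hc, hιapp] at this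
      rw [← Submodule.Quotient.mk_add] at this
      convert this using 2
      ext <;> simp
    rw [Submodule.Quotient.mk_eq_zero, Submodule.mem_prod] at h0
    obtain ⟨hx0', hyc⟩ := h0
    have hx0 : x = 0 := by simpa using hx0'
    have hcK : c ∈ K := by
      have : f x = 0 := by rw [hx0, map_zero]
      rw [← Submodule.Quotient.mk_eq_zero, hc, this]
    have hyK : y ∈ K := by
      have := K.sub_mem hyc hcK; simpa using this
    exact ⟨(x, y), ⟨by simp [hx0], hyK⟩, rfl⟩
  obtain ⟨φ, hφ⟩ := hdual ⊥ L isSmall_bot hLsmall η hηsurj hηker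
  refine ⟨snd R M₁ M₂ ∘ₗ φ ∘ₗ inl R M₁ M₂, ?_⟩
  ext x
  obtain ⟨c, hc⟩ := Submodule.Quotient.mk_surjective K (f x)
  have h1 : L.mkQ (φ (x, 0)) = η (Submodule.Quotient.mk (x, 0)) := by
    have := congrArg (fun m => m (x, 0)) hφ
    simpa using this
  rw [hηapp] at h1
  have h2 : Submodule.Quotient.mk (p := L) (φ (x, 0)) = Submodule.Quotient.mk (x, c) := by
    rw [mkQ_apply] at h1
    rw [h1]
    simp only [hw, LinearMap.add_apply, comp_apply, fst_apply, mkQ_apply, ← hc, hιapp]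
    rw [← Submodule.Quotient.mk_add]
    congr 1
    ext <;> simp
  rw [Submodule.Quotient.eq, Submodule.mem_prod] at h2
  obtain ⟨-, hsnd⟩ := h2
  have : (φ (x, 0)).2 - c ∈ K := hsnd
  simp only [comp_apply, inl_apply, snd_apply, mkQ_apply]
  rw [← hc, Submodule.Quotient.eq]
  exact this

theorem smallProj_left (hdual : IsDualAutoInv R (M₁ × M₂)) {K : Submodule R M₁}
    (hK : IsSmall K) (f : M₂ →ₗ[R] M₁ ⧸ K) : ∃ g : M₂ →ₗ[R] M₁, K.mkQ ∘ₗ g = f := by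
  set L : Submodule R (M₁ × M₂) := Submodule.prod K ⊥ with hL
  have hLsmall : IsSmall L := by
    have := hK.map (inl R M₁ M₂); rwa [Submodule.map_inl] at this
  have hι : K ≤ ker (L.mkQ ∘ₗ inl R M₁ M₂) := by
    intro k hk
    simp only [mem_ker, comp_apply, inl_apply, mkQ_apply, Submodule.Quotient.mk_eq_zero]
    exact ⟨hk, Submodule.zero_mem _⟩
  set ι : (M₁ ⧸ K) →ₗ[R] (M₁ × M₂) ⧸ L := K.liftQ (L.mkQ ∘ₗ inl R M₁ M₂) hι with hιdef
  have hιapp : ∀ c : M₁, ι (Submodule.Quotient.mk c) = Submodule.Quotient.mk (c, 0) := by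
    intro c; simp [hιdef, liftQ_apply]
  set w : (M₁ × M₂) →ₗ[R] (M₁ × M₂) ⧸ L := L.mkQ + ι ∘ₗ f ∘ₗ snd R M₁ M₂ with hw
  set η : ((M₁ × M₂) ⧸ (⊥ : Submodule R (M₁ × M₂))) →ₗ[R] (M₁ × M₂) ⧸ L :=
    (⊥ : Submodule R (M₁ × M₂)).liftQ w bot_le with hη
  have hηapp : ∀ x : M₁ × M₂, η (Submodule.Quotient.mk x) = w x := by
    intro x; simp [hη, liftQ_apply]
  have hηsurj : Function.Surjective η := by
    intro z
    obtain ⟨⟨a, b⟩, rfl⟩ := Submodule.Quotient.mk_surjective L z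
    obtain ⟨c, hc⟩ := Submodule.Quotient.mk_surjective K (f b)
    refine ⟨Submodule.Quotient.mk (a - c, b), ?_⟩
    rw [hηapp]
    simp only [hw, LinearMap.add_apply, comp_apply, snd_apply, mkQ_apply]
    rw [← hc, hιapp]
    rw [← Submodule.Quotient.mk_add]
    congr 1
    ext <;> simp
  have hηker : IsSmall (ker η) := by
    refine IsSmall.mono ?_ (hLsmall.map (⊥ : Submodule R (M₁ × M₂)).mkQ)
    intro q hq
    obtain ⟨⟨x, y⟩, rfl⟩ := Submodule.Quotient.mk_surjective _ q
    rw [mem_ker, hηapp] at hq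
    obtain ⟨c, hc⟩ := Submodule.Quotient.mk_surjective K (f y)
    have h0 : Submodule.Quotient.mk (p := L) (x + c, y) = 0 := by
      have := hq
      simp only [hw, LinearMap.add_apply, comp_apply, snd_apply, mkQ_apply, ← hc, hιapp] at this
      rw [← Submodule.Quotient.mk_add] at this
      convert this using 2
      ext <;> simp
    rw [Submodule.Quotient.mk_eq_zero, Submodule.mem_prod] at h0
    obtain ⟨hxc, hy0'⟩ := h0
    have hy0 : y = 0 := by simpa using hy0'
    have hcK : c ∈ K := by
      have : f y = 0 := by rw [hy0, map_zero]
      rw [← Submodule.Quotient.mk_eq_zero, hc, this]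
    have hxK : x ∈ K := by
      have := K.sub_mem hxc hcK; simpa using this
    exact ⟨(x, y), ⟨hxK, by simp [hy0]⟩, rfl⟩
  obtain ⟨φ, hφ⟩ := hdual ⊥ L isSmall_bot hLsmall η hηsurj hηker
  refine ⟨fst R M₁ M₂ ∘ₗ φ ∘ₗ inr R M₁ M₂, ?_⟩
  ext y
  obtain ⟨c, hc⟩ := Submodule.Quotient.mk_surjective K (f y)
  have h1 : L.mkQ (φ (0, y)) = η (Submodule.Quotient.mk (0, y)) := by
    have := congrArg (fun m => m (0, y)) hφ
    simpa using this
  rw [hηapp] at h1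
  have h2 : Submodule.Quotient.mk (p := L) (φ (0, y)) = Submodule.Quotient.mk (c, y) := by
    rw [mkQ_apply] at h1
    rw [h1]
    simp only [hw, LinearMap.add_apply, comp_apply, snd_apply, mkQ_apply, ← hc, hιapp]
    rw [← Submodule.Quotient.mk_add]
    congr 1
    ext <;> simp
  rw [Submodule.Quotient.eq, Submodule.mem_prod] at h2
  obtain ⟨hfst, -⟩ := h2
  simp only [comp_apply, inr_apply, fst_apply, mkQ_apply]
  rw [← hc, Submodule.Quotient.eq]
  exact hfst

end A

/-! ### From small-quotient lifting to full relative projectivity, over perfect rings -/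

theorem relProj_of_smallProj {R : Type u} [Ring R] (hR : IsRightPerfect R)
    {A B : Type u} [AddCommGroup A] [Module R A] [AddCommGroup B] [Module R B]
    (hsmall : ∀ K : Submodule R B, IsSmall K → ∀ f : A →ₗ[R] B ⧸ K,
      ∃ g : A →ₗ[R] B, K.mkQ ∘ₗ g = f) :
    IsRelProjective R A B := by
  intro N f
  obtain ⟨P, _, _, hP, p, hpsurj, hpker⟩ := hR A
  haveI := hP
  obtain ⟨u, hu⟩ := Module.projective_lifting_property N.mkQ (f ∘ₗ p)
    (Submodule.Quotient.mk_surjective N)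
  set K' : Submodule R B := (ker p).map u with hK'
  have hK'small : IsSmall K' := hpker.map u
  have huk : ∀ k ∈ ker p, u k ∈ N := by
    intro k hk
    rw [← Submodule.Quotient.mk_eq_zero]
    have : N.mkQ (u k) = f (p k) := by
      have := congrArg (fun m => m k) hu; simpa using this
    rw [mkQ_apply] at this
    rw [this, (mem_ker.mp hk), map_zero]
  have hK'N : K' ≤ N := by
    rintro x ⟨k, hk, rfl⟩; exact huk k hk
  have hkerv : ker p ≤ ker (K'.mkQ ∘ₗ u) := by
    intro k hk
    simp only [mem_ker, comp_apply, mkQ_apply, Submodule.Quotient.mk_eq_zero]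
    exact ⟨k, hk, rfl⟩
  set e := p.quotKerEquivOfSurjective hpsurj with he
  have heapp : ∀ x : P, e (Submodule.Quotient.mk x) = p x := fun x => rfl
  set v : A →ₗ[R] B ⧸ K' := ((ker p).liftQ (K'.mkQ ∘ₗ u) hkerv) ∘ₗ (e.symm : A →ₗ[R] P ⧸ ker p)
    with hv
  have hvp : ∀ x : P, v (p x) = K'.mkQ (u x) := by
    intro x
    have h1 : e.symm (p x) = Submodule.Quotient.mk x := by
      rw [LinearEquiv.symm_apply_eq, heapp]
    simp [hv, h1, liftQ_apply]
  obtain ⟨g, hg⟩ := hsmall K' hK'small v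
  refine ⟨g, ?_⟩
  ext a
  obtain ⟨x, rfl⟩ := hpsurj a
  have h2 : K'.mkQ (g (p x)) = K'.mkQ (u x) := by
    have := congrArg (fun m => m (p x)) hg
    simpa [hvp x] using this
  have h3 : g (p x) - u x ∈ N := hK'N (by
    rw [← Submodule.Quotient.mk_eq_zero]
    simp only [mkQ_apply] at h2
    rwa [Submodule.Quotient.mk_sub, sub_eq_zero] )
  have h4 : N.mkQ (g (p x)) = N.mkQ (u x) := by
    simp only [mkQ_apply]
    exact (Submodule.Quotient.eq N).mpr h3
  simp only [comp_apply]
  rw [h4]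
  have := congrArg (fun m => m x) hu
  simpa using this

/-! ### Relative projectivity and finite direct sums -/

section C
variable {R A A' B B₁ B₂ : Type*} [Ring R] [AddCommGroup A] [Module R A]
  [AddCommGroup A'] [Module R A'] [AddCommGroup B] [Module R B]
  [AddCommGroup B₁] [Module R B₁] [AddCommGroup B₂] [Module R B₂]

theorem relProj_prod_left (h : IsRelProjective R A B) (h' : IsRelProjective R A' B) :
    IsRelProjective R (A × A') B := by
  intro N f
  obtain ⟨g₁, hg₁⟩ := h N (f ∘ₗ inl R A A')
  obtain ⟨g₂, hg₂⟩ := h' N (f ∘ₗ inr R A A')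
  refine ⟨g₁.coprod g₂, ?_⟩
  apply LinearMap.ext
  rintro ⟨a, a'⟩
  have h1 := congrArg (fun m => m a) hg₁
  have h2 := congrArg (fun m => m a') hg₂
  simp only [comp_apply, inl_apply, inr_apply] at h1 h2
  have hsplit : ((a, a') : A × A') = (a, 0) + (0, a') := by ext <;> simp
  simp only [comp_apply, coprod_apply, map_add, h1, h2]
  rw [hsplit, map_add]

theorem relProj_prod_right (h₁ : IsRelProjective R A B₁) (h₂ : IsRelProjective R A B₂) :
    IsRelProjective R A (B₁ × B₂) := by
  intro N f
  set π : (B₁ × B₂) →ₗ[R] (B₁ × B₂) ⧸ N := N.mkQ with hπ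
  set C₂ : Submodule R ((B₁ × B₂) ⧸ N) := range (π ∘ₗ inr R B₁ B₂) with hC₂
  set s : B₁ →ₗ[R] ((B₁ × B₂) ⧸ N) ⧸ C₂ := C₂.mkQ ∘ₗ π ∘ₗ inl R B₁ B₂ with hs
  have hssurj : Function.Surjective s := by
    intro z
    obtain ⟨c, rfl⟩ := Submodule.Quotient.mk_surjective C₂ z
    obtain ⟨⟨b₁, b₂⟩, rfl⟩ := Submodule.Quotient.mk_surjective N c
    refine ⟨b₁, ?_⟩
    have hsplit : ((b₁, b₂) : B₁ × B₂) = (b₁, 0) + (0, b₂) := by ext <;> simp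
    simp only [hs, comp_apply, inl_apply, mkQ_apply]
    rw [hsplit]
    rw [Submodule.Quotient.mk_add, Submodule.Quotient.mk_add]
    have : Submodule.Quotient.mk (p := C₂) (Submodule.Quotient.mk (p := N) ((0 : B₁), b₂)) = 0 := by
      rw [Submodule.Quotient.mk_eq_zero]
      exact ⟨b₂, rfl⟩
    rw [this, add_zero]
    rfl
  set e := s.quotKerEquivOfSurjective hssurj with he
  obtain ⟨g₁, hg₁⟩ := h₁ (ker s) ((e.symm : (((B₁ × B₂) ⧸ N) ⧸ C₂) →ₗ[R] B₁ ⧸ ker s) ∘ₗ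
    C₂.mkQ ∘ₗ f)
  have hsg₁ : ∀ a : A, s (g₁ a) = C₂.mkQ (f a) := by
    intro a
    have h1 := congrArg (fun m => e (m a)) hg₁
    simp only [comp_apply, mkQ_apply, LinearEquiv.coe_coe, LinearEquiv.apply_symm_apply] at h1
    exact h1
  set d : A →ₗ[R] (B₁ × B₂) ⧸ N := f - π ∘ₗ inl R B₁ B₂ ∘ₗ g₁ with hd
  have hdC₂ : ∀ a : A, d a ∈ C₂ := by
    intro a
    have h0 : C₂.mkQ (d a) = 0 := by
      simp only [hd, LinearMap.sub_apply, map_sub, comp_apply]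
      rw [sub_eq_zero]
      exact (hsg₁ a).symm
    rw [mkQ_apply, Submodule.Quotient.mk_eq_zero] at h0
    exact h0
  set r : B₂ →ₗ[R] (B₁ × B₂) ⧸ N := π ∘ₗ inr R B₁ B₂ with hr
  set e₂ := r.quotKerEquivRange with he₂
  set d' : A →ₗ[R] ↥(range r) := codRestrict (range r) d (fun a => hdC₂ a) with hd'
  obtain ⟨g₂, hg₂⟩ := h₂ (ker r) ((e₂.symm : ↥(range r) →ₗ[R] B₂ ⧸ ker r) ∘ₗ d')
  have hrg₂ : ∀ a : A, r (g₂ a) = d a := by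
    intro a
    have h1 := congrArg (fun m => e₂ (m a)) hg₂
    simp only [comp_apply, mkQ_apply, LinearEquiv.coe_coe, LinearEquiv.apply_symm_apply] at h1
    have h2 : (e₂ (Submodule.Quotient.mk (g₂ a)) : (B₁ × B₂) ⧸ N) = r (g₂ a) := rfl
    have h3 : ((d' a : ↥(range r)) : (B₁ × B₂) ⧸ N) = d a := rfl
    rw [← h2, h1, h3]
  refine ⟨g₁.prod g₂, ?_⟩
  ext a
  have hsplit : ((g₁ a, g₂ a) : B₁ × B₂) = (g₁ a, 0) + (0, g₂ a) := by ext <;> simp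
  simp only [comp_apply, prod_apply, Pi.prod]
  change π (g₁ a, g₂ a) = f a
  rw [hsplit, map_add]
  have h4 : π (g₁ a, 0) = f a - d a := by
    simp [hd]
  have h5 : π (0, g₂ a) = d a := hrg₂ a
  rw [h4, h5]
  abel

end C

/-- Over a right perfect ring R: if M₁ ⊕ M₂ is dual automorphism-invariant, then
M₁ and M₂ are dual automorphism-invariant and projective relative to each other;
consequently M is quasi-projective iff M ⊕ M is dual automorphism-invariant. -/
theorem perfect_dualAutoInv_prod
    {R : Type u} [Ring R] (hR : IsRightPerfect R) :
    (∀ (M₁ M₂ : Type u) [AddCommGroup M₁] [Module R M₁] [AddCommGroup M₂] [Module R M₂],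
        IsDualAutoInv R (M₁ × M₂) →
          IsDualAutoInv R M₁ ∧ IsDualAutoInv R M₂ ∧
            IsRelProjective R M₁ M₂ ∧ IsRelProjective R M₂ M₁) ∧
    (∀ (M : Type u) [AddCommGroup M] [Module R M],
        IsQuasiProjective R M ↔ IsDualAutoInv R (M × M)) := by
  constructor
  · intro M₁ M₂ _ _ _ _ hdual
    refine ⟨dualAutoInv_left hdual, dualAutoInv_right hdual, ?_, ?_⟩
    · exact relProj_of_smallProj hR (fun K hK f => smallProj_right hdual hK f)
    · exact relProj_of_smallProj hR (fun K hK f => smallProj_left hdual hK f)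
  · intro M _ _
    constructor
    · intro hq
      have h1 : IsRelProjective R M M := hq
      have h2 : IsRelProjective R M (M × M) := relProj_prod_right h1 h1
      have h3 : IsRelProjective R (M × M) (M × M) := relProj_prod_left h2 h2
      intro K₁ K₂ _ _ η _ _
      exact h3 K₂ (η ∘ₗ K₁.mkQ)
    · intro hdual
      exact fun N f => relProj_of_smallProj hR
        (fun K hK f => smallProj_right hdual hK f) N f
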